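/- Let B ⊆ ℝ^d be compact and span ℝ^d, contained in the closed unit ball, and suppose the unit ball is the minimum-volume origin-centered ellipsoid containing B. If (1/d)·I is not in the convex hull of {x x^T : x ∈ B}, then there exists a quadratic form q on ℝ^d with q(x) ≤ 1 for all x ∈ B and trace(q) > d, and for sufficiently small ε > 0 the ellipsoid {x : (1−ε)‖x‖² + ε·q(x) ≤ 1} contains B and has volume strictly smaller than the unit ball — a contradiction. Hence (1/d)·I ∈ conv{x x^T : x ∈ B}. -/

import Mathlib

open Filter Set

/-- If `φ 0 = 0` and `φ` has positive derivative at `0`, then `φ` is eventually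
positive on the right of `0`. -/
lemma aux_deriv_pos {φ : ℝ → ℝ} {c : ℝ} (h0 : φ 0 = 0) (hφ : HasDerivAt φ c 0) (hc : 0 < c) :
    ∀ᶠ ε in nhdsWithin (0:ℝ) (Set.Ioi 0), 0 < φ ε := by
  have hslope := hasDerivAt_iff_tendsto_slope.mp hφ
  have h1 : ∀ᶠ ε in nhdsWithin (0:ℝ) {(0:ℝ)}ᶜ, 0 < slope φ 0 ε :=
    hslope.eventually_const_lt hc
  have h2 : ∀ᶠ ε in nhdsWithin (0:ℝ) (Set.Ioi 0), 0 < slope φ 0 ε :=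
    h1.filter_mono (nhdsWithin_mono 0 (fun x hx => ne_of_gt hx))
  filter_upwards [h2, self_mem_nhdsWithin] with ε hε hε0
  have hε0' : (0:ℝ) < ε := hε0
  have hs : slope φ 0 ε = φ ε / ε := by
    simp [slope_def_field, h0]
  rw [hs] at hε
  have := mul_pos hε hε0'
  rwa [div_mul_cancel₀ _ (ne_of_gt hε0')] at this

/-- The convex hull of a nonempty compact set in a finite-dimensional normed space
is compact. -/
lemma aux_isCompact_convexHull {E : Type*} [NormedAddCommGroup E] [NormedSpace ℝ E]
    [FiniteDimensional ℝ E] {s : Set E} (hs : IsCompact s) (hne : s.Nonempty) :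
    IsCompact (convexHull ℝ s) := by
  classical
  obtain ⟨z₀, hz₀⟩ := hne
  set N := Module.finrank ℝ E + 1 with hN
  set g : (Fin N → ℝ) × (Fin N → E) → E := fun p => ∑ i, p.1 i • p.2 i with hg
  have hgcont : Continuous g := by
    apply continuous_finset_sum
    intro i _
    exact ((continuous_apply i).comp continuous_fst).smul
      ((continuous_apply i).comp continuous_snd)
  have hK : IsCompact ((stdSimplex ℝ (Fin N)) ×ˢ (Set.univ.pi fun _ : Fin N => s)) :=
    IsCompact.prod (isCompact_stdSimplex ℝ (Fin N)) (isCompact_univ_pi fun _ => hs)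
  have himg : convexHull ℝ s = g '' ((stdSimplex ℝ (Fin N)) ×ˢ (Set.univ.pi fun _ : Fin N => s)) := by
    apply Subset.antisymm
    · intro x hx
      obtain ⟨ι, hfin, z, w, hrange, hindep, hpos, hsum, hxx⟩ :=
        eq_pos_convex_span_of_mem_convexHull hx
      have hcard : Fintype.card ι ≤ N := by
        have h1 := hindep.card_le_finrank_succ
        have h2 : Module.finrank ℝ (vectorSpan ℝ (Set.range z)) ≤ Module.finrank ℝ E :=
          Submodule.finrank_le _
        omega
      let F : ι ↪ Fin N := (Fintype.equivFin ι).toEmbedding.trans (Fin.castLEEmb hcard)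
      let w' : Fin N → ℝ := fun j => if h : ∃ i, F i = j then w h.choose else 0
      let z' : Fin N → E := fun j => if h : ∃ i, F i = j then z h.choose else z₀
      have hFw : ∀ i, w' (F i) = w i := by
        intro i
        have h : ∃ i', F i' = F i := ⟨i, rfl⟩
        simp only [w', dif_pos h]
        congr 1
        exact F.injective h.choose_spec
      have hFz : ∀ i, z' (F i) = z i := by
        intro i
        have h : ∃ i', F i' = F i := ⟨i, rfl⟩
        simp only [z', dif_pos h]
        congr 1
        exact F.injective h.choose_spec
      have hw0 : ∀ j ∉ Finset.univ.image F, w' j = 0 := by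
        intro j hj
        have : ¬ ∃ i, F i = j := by
          intro ⟨i, hi⟩
          exact hj (Finset.mem_image.mpr ⟨i, Finset.mem_univ i, hi⟩)
        simp only [w', dif_neg this]
      have hsum' : ∑ j, w' j = 1 := by
        rw [← Finset.sum_subset (Finset.subset_univ (Finset.univ.image F))
          (fun j _ hj => hw0 j hj)]
        rw [Finset.sum_image (fun a _ b _ h => F.injective h)]
        simpa [hFw] using hsum
      have hxx' : ∑ j, w' j • z' j = x := by
        rw [← Finset.sum_subset (Finset.subset_univ (Finset.univ.image F))
          (fun j _ hj => by rw [hw0 j hj, zero_smul])]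
        rw [Finset.sum_image (fun a _ b _ h => F.injective h)]
        simp only [hFw, hFz]
        exact hxx
      refine ⟨(w', z'), ⟨⟨fun j => ?_, hsum'⟩, fun j _ => ?_⟩, hxx'⟩
      · by_cases h : ∃ i, F i = j
        · simp only [w', dif_pos h]; exact (hpos _).le
        · simp only [w', dif_neg h]; exact le_refl 0
      · by_cases h : ∃ i, F i = j
        · simp only [z', dif_pos h]; exact hrange ⟨_, rfl⟩
        · simp only [z', dif_neg h]; exact hz₀
    · rintro _ ⟨⟨w, z⟩, ⟨hw, hz⟩, rfl⟩
      exact (convex_convexHull ℝ s).sum_mem (fun i _ => hw.1 i) hw.2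
        (fun i _ => subset_convexHull ℝ s (hz i (Set.mem_univ i)))
  rw [himg]
  exact hK.image hgcont

/-- Strict separation of a point from the convex hull of a compact set. -/
lemma aux_sep {E : Type*} [NormedAddCommGroup E] [NormedSpace ℝ E] [FiniteDimensional ℝ E]
    {s : Set E} (hs : IsCompact s) (hne : s.Nonempty) {p : E} (hp : p ∉ convexHull ℝ s) :
    ∃ (f : E →L[ℝ] ℝ) (u : ℝ), (∀ a ∈ s, f a < u) ∧ u < f p := by
  obtain ⟨f, u, h1, h2⟩ := geometric_hahn_banach_closed_point (convex_convexHull ℝ s)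
    (aux_isCompact_convexHull hs hne).isClosed hp
  exact ⟨f, u, fun a ha => h1 a (subset_convexHull ℝ s ha), h2⟩

/-- Expansion of a linear functional on `Fin d → Fin d → ℝ` in terms of the entries. -/
lemma aux_expand (d : ℕ) (f : (Fin d → Fin d → ℝ) →L[ℝ] ℝ) (M : Fin d → Fin d → ℝ) :
    f M = ∑ i, ∑ j, M i j *
      f (fun k l => if k = i then (if l = j then (1:ℝ) else 0) else 0) := by
  have hM : M = ∑ i : Fin d, ∑ j : Fin d,
      M i j • (fun k l => if k = i then (if l = j then (1:ℝ) else 0) else 0) := by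
    funext k l
    simp only [Finset.sum_apply, Pi.smul_apply, smul_eq_mul, mul_ite, mul_one, mul_zero]
    simp [Finset.sum_ite_eq', Finset.sum_ite_eq]
  conv_lhs => rw [hM]
  simp only [map_sum, map_smul, smul_eq_mul]

theorem stmt19 (d : ℕ) (hd : 0 < d) (B : Set (Fin d → ℝ)) (hB : IsCompact B)
    (hspan : Submodule.span ℝ B = ⊤)
    (hball : ∀ x ∈ B, ∑ i, x i ^ 2 ≤ 1)
    (hmin : ∀ Q : Matrix (Fin d) (Fin d) ℝ, Q.PosDef →
      (∀ x ∈ B, dotProduct x (Q.mulVec x) ≤ 1) → Q.det ≤ 1) :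
    ((1 : ℝ) / d) • (1 : Matrix (Fin d) (Fin d) ℝ) ∈
      convexHull ℝ {M : Matrix (Fin d) (Fin d) ℝ | ∃ x ∈ B, M = Matrix.vecMulVec x x} := by
  classical
  by_contra hcon
  haveI : Nonempty (Fin d) := ⟨⟨0, hd⟩⟩
  have hBne : B.Nonempty := by
    rcases B.eq_empty_or_nonempty with h | h
    · exfalso
      rw [h, Submodule.span_empty] at hspan
      exact absurd hspan bot_ne_top
    · exact h
  set g : (Fin d → ℝ) → (Fin d → Fin d → ℝ) := fun x i j => x i * x j with hgdef
  have hgcont : Continuous g := by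
    apply continuous_pi; intro i; apply continuous_pi; intro j
    exact (continuous_apply i).mul (continuous_apply j)
  have hScpt : IsCompact (g '' B) := hB.image hgcont
  have hSne : (g '' B).Nonempty := hBne.image g
  have hpS : (((1 : ℝ) / d) • (1 : Matrix (Fin d) (Fin d) ℝ) : Fin d → Fin d → ℝ)
      ∉ convexHull ℝ (g '' B) := by
    intro hc
    apply hcon
    have hSeq : g '' B = {M : Matrix (Fin d) (Fin d) ℝ | ∃ x ∈ B, M = Matrix.vecMulVec x x} := by
      ext M
      constructor
      · rintro ⟨x, hx, rfl⟩; exact ⟨x, hx, rfl⟩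
      · rintro ⟨x, hx, rfl⟩; exact ⟨x, hx, rfl⟩
    rw [hSeq] at hc
    exact hc
  obtain ⟨f, u, hfu, hup⟩ := aux_sep hScpt hSne hpS
  have aux_expand' : ∀ M : Fin d → Fin d → ℝ, f M = ∑ i, ∑ j, M i j *
      f (fun k l => if k = i then (if l = j then (1:ℝ) else 0) else 0) := aux_expand d f
  set H : Fin d → Fin d → ℝ :=
    fun i j => f (fun k l => if k = i then (if l = j then (1:ℝ) else 0) else 0) with hHdef
  have hexp : ∀ M : Fin d → Fin d → ℝ, f M = ∑ i, ∑ j, M i j * H i j := aux_expand'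
  -- the quadratic form of H is < u on B
  have hq : ∀ x ∈ B, (∑ i, ∑ j, (x i * x j) * H i j) < u := by
    intro x hx
    have h1 := hfu (g x) ⟨x, hx, rfl⟩
    rw [hexp] at h1
    exact h1
  -- trace inequality
  have htu : (d : ℝ) * u < ∑ i, H i i := by
    have h1 := hup
    replace h1 := h1.trans_eq (hexp _)
    have h2 : ∑ i, ∑ j,
        ((((1 : ℝ) / d) • (1 : Matrix (Fin d) (Fin d) ℝ) : Fin d → Fin d → ℝ) i j) * H i j
        = (1 / d) * ∑ i, H i i := by
      rw [Finset.mul_sum]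
      refine Finset.sum_congr rfl fun i _ => ?_
      rw [Finset.sum_eq_single i]
      · simp [Matrix.smul_apply, Matrix.one_apply]
      · intro j _ hj
        simp [Matrix.smul_apply, Matrix.one_apply, Ne.symm hj]
      · simp
    rw [h2] at h1
    have hd' : (0:ℝ) < d := by exact_mod_cast hd
    rw [div_mul_eq_mul_div, lt_div_iff₀ hd'] at h1
    nlinarith [h1]
  -- the symmetrized matrix
  set G : Matrix (Fin d) (Fin d) ℝ := Matrix.of (fun i j => (H i j + H j i) / 2) with hGdef
  have hGapp : ∀ i j, G i j = (H i j + H j i) / 2 := fun i j => rfl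
  have hGsym : ∀ i j, G j i = G i j := by
    intro i j; rw [hGapp, hGapp]; ring
  have htr : G.trace = ∑ i, H i i := by
    unfold Matrix.trace
    refine Finset.sum_congr rfl fun i _ => ?_
    simp [Matrix.diag, hGapp]
  -- quadratic form of G equals that of H
  have hGq : ∀ x : Fin d → ℝ, (∑ i, ∑ j, G i j * (x i * x j)) = ∑ i, ∑ j, (x i * x j) * H i j := by
    intro x
    have hswap : ∑ i, ∑ j, H j i * (x i * x j) = ∑ i, ∑ j, H i j * (x i * x j) := by
      rw [Finset.sum_comm]
      exact Finset.sum_congr rfl fun i _ => Finset.sum_congr rfl fun j _ => by ring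
    have h1 : ∀ i j, G i j * (x i * x j)
        = (H i j * (x i * x j)) / 2 + (H j i * (x i * x j)) / 2 := by
      intro i j; rw [hGapp]; ring
    calc ∑ i, ∑ j, G i j * (x i * x j)
        = ∑ i, ∑ j, ((H i j * (x i * x j)) / 2 + (H j i * (x i * x j)) / 2) := by
          exact Finset.sum_congr rfl fun i _ => Finset.sum_congr rfl fun j _ => h1 i j
      _ = (∑ i, ∑ j, H i j * (x i * x j)) / 2 + (∑ i, ∑ j, H j i * (x i * x j)) / 2 := by
          simp [Finset.sum_add_distrib, Finset.sum_div]
      _ = ∑ i, ∑ j, H i j * (x i * x j) := by rw [hswap]; ring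
      _ = ∑ i, ∑ j, (x i * x j) * H i j :=
          Finset.sum_congr rfl fun i _ => Finset.sum_congr rfl fun j _ => by ring
  -- bound on the quadratic form of G
  set Msum : ℝ := ∑ i, ∑ j, |G i j| with hMsum
  have hquad_abs : ∀ x : Fin d → ℝ,
      |∑ i, ∑ j, G i j * (x i * x j)| ≤ Msum * ∑ k, x k ^ 2 := by
    intro x
    set Sx := ∑ k, x k ^ 2 with hSx
    have hSx0 : 0 ≤ Sx := Finset.sum_nonneg fun k _ => sq_nonneg _
    have hx2 : ∀ k, x k ^ 2 ≤ Sx := fun k =>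
      Finset.single_le_sum (fun k _ => sq_nonneg (x k)) (Finset.mem_univ k)
    have hterm : ∀ i j, |G i j * (x i * x j)| ≤ |G i j| * Sx := by
      intro i j
      rw [abs_mul]
      refine mul_le_mul_of_nonneg_left ?_ (abs_nonneg _)
      have := hx2 i
      have := hx2 j
      nlinarith [sq_abs (x i), sq_abs (x j), abs_mul (x i) (x j),
        sq_nonneg (|x i| - |x j|), abs_nonneg (x i), abs_nonneg (x j)]
    calc |∑ i, ∑ j, G i j * (x i * x j)|
        ≤ ∑ i, |∑ j, G i j * (x i * x j)| := Finset.abs_sum_le_sum_abs _ _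
      _ ≤ ∑ i, ∑ j, |G i j * (x i * x j)| :=
          Finset.sum_le_sum fun i _ => Finset.abs_sum_le_sum_abs _ _
      _ ≤ ∑ i, ∑ j, |G i j| * Sx :=
          Finset.sum_le_sum fun i _ => Finset.sum_le_sum fun j _ => hterm i j
      _ = Msum * Sx := by rw [hMsum, Finset.sum_mul]; simp [Finset.sum_mul]
  -- dot product expansion
  have hdot : ∀ (A : Matrix (Fin d) (Fin d) ℝ) (x : Fin d → ℝ),
      dotProduct x (A.mulVec x) = ∑ i, ∑ j, A i j * (x i * x j) := by
    intro A x
    simp only [dotProduct, Matrix.mulVec, Finset.mul_sum]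
    exact Finset.sum_congr rfl fun i _ => Finset.sum_congr rfl fun j _ => by ring
  -- eventual conditions
  set P : Polynomial ℝ :=
    ((1 + (Polynomial.X : Polynomial ℝ) • G.map Polynomial.C).det).divX.divX with hP
  set φ : ℝ → ℝ :=
    fun ε => (1 + G.trace * ε + Polynomial.eval ε P * ε ^ 2) - (1 + u * ε) ^ d with hφ
  have hφ0 : φ 0 = 0 := by simp [hφ]
  have hφ' : HasDerivAt φ (G.trace - d * u) 0 := by
    have h1 : HasDerivAt (fun ε : ℝ => 1 + G.trace * ε + Polynomial.eval ε P * ε ^ 2)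
        (G.trace) 0 := by
      have ha : HasDerivAt (fun ε : ℝ => 1 + G.trace * ε) G.trace 0 := by
        simpa using ((hasDerivAt_id (0:ℝ)).const_mul G.trace).const_add 1
      have hb : HasDerivAt (fun ε : ℝ => Polynomial.eval ε P * ε ^ 2)
          (Polynomial.eval (0:ℝ) P.derivative * 0 ^ 2 + Polynomial.eval (0:ℝ) P * (2 * 0 ^ 1)) 0 :=
        (P.hasDerivAt 0).mul (hasDerivAt_pow 2 0)
      exact (ha.add hb).congr_deriv (by simp)
    have h2 : HasDerivAt (fun ε : ℝ => (1 + u * ε) ^ d) (d * u) 0 := by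
      have ha : HasDerivAt (fun ε : ℝ => 1 + u * ε) u 0 := by
        simpa using ((hasDerivAt_id (0:ℝ)).const_mul u).const_add 1
      have hb := ha.pow d
      exact hb.congr_deriv (by simp)
    exact h1.sub h2
  have hev3 : ∀ᶠ ε in nhdsWithin (0:ℝ) (Set.Ioi 0), 0 < φ ε := by
    refine aux_deriv_pos hφ0 hφ' ?_
    rw [htr]; linarith
  have hev1 : ∀ᶠ ε in nhdsWithin (0:ℝ) (Set.Ioi 0), ε * Msum < 1 := by
    have h1 : Tendsto (fun ε : ℝ => ε * Msum) (nhds 0) (nhds (0 * Msum)) :=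
      tendsto_id.mul_const Msum
    exact (h1.eventually_lt_const (by simp)).filter_mono nhdsWithin_le_nhds
  have hev2 : ∀ᶠ ε in nhdsWithin (0:ℝ) (Set.Ioi 0), 0 < 1 + u * ε := by
    have h1 : Tendsto (fun ε : ℝ => 1 + u * ε) (nhds 0) (nhds (1 + u * 0)) :=
      (tendsto_id.const_mul u).const_add 1
    exact (h1.eventually_const_lt (by simp)).filter_mono nhdsWithin_le_nhds
  obtain ⟨ε, ⟨⟨hε1, hε2⟩, hε3⟩, hεpos⟩ :=
    (((hev1.and hev2).and hev3).and self_mem_nhdsWithin).exists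
  have hεpos' : (0:ℝ) < ε := hεpos
  set c : ℝ := 1 + u * ε with hc
  set Q : Matrix (Fin d) (Fin d) ℝ := c⁻¹ • (1 + ε • G) with hQ
  have hQij : ∀ i j, Q i j = c⁻¹ * ((if i = j then (1:ℝ) else 0) + ε * G i j) := by
    intro i j
    simp only [hQ, Matrix.smul_apply, Matrix.add_apply, Matrix.one_apply, smul_eq_mul]
  have hsplit : ∀ x : Fin d → ℝ, dotProduct x (Q.mulVec x)
      = c⁻¹ * ((∑ k, x k ^ 2) + ε * ∑ i, ∑ j, G i j * (x i * x j)) := by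
    intro x
    rw [hdot]
    have h1 : ∀ i j, Q i j * (x i * x j)
        = c⁻¹ * ((if i = j then (1:ℝ) else 0) * (x i * x j)) + (c⁻¹ * ε) * (G i j * (x i * x j)) := by
      intro i j; rw [hQij]; ring
    calc ∑ i, ∑ j, Q i j * (x i * x j)
        = ∑ i, ∑ j, (c⁻¹ * ((if i = j then (1:ℝ) else 0) * (x i * x j))
            + (c⁻¹ * ε) * (G i j * (x i * x j))) :=
          Finset.sum_congr rfl fun i _ => Finset.sum_congr rfl fun j _ => h1 i j
      _ = c⁻¹ * (∑ i, ∑ j, (if i = j then (1:ℝ) else 0) * (x i * x j))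
            + (c⁻¹ * ε) * (∑ i, ∑ j, G i j * (x i * x j)) := by
          simp [Finset.sum_add_distrib, Finset.mul_sum]
      _ = c⁻¹ * ((∑ k, x k ^ 2) + ε * ∑ i, ∑ j, G i j * (x i * x j)) := by
          have hdiag : ∑ i, ∑ j, (if i = j then (1:ℝ) else 0) * (x i * x j) = ∑ k, x k ^ 2 := by
            refine Finset.sum_congr rfl fun i _ => ?_
            rw [Finset.sum_eq_single i]
            · simp [sq]
            · intro j _ hj; simp [Ne.symm hj]
            · simp
          rw [hdiag]; ring
  -- Q is positive definite
  have hQpos : Q.PosDef := by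
    rw [Matrix.posDef_iff_dotProduct_mulVec]
    constructor
    · show Q.conjTranspose = Q
      ext i j
      simp only [Matrix.conjTranspose_apply, star_trivial]
      rw [hQij, hQij, hGsym i j]
      by_cases h : i = j
      · subst h; rfl
      · simp [h, Ne.symm h]
    · intro x hx
      have hstar : star x = x := by funext k; simp
      rw [hstar, hsplit]
      have hSx : 0 < ∑ k, x k ^ 2 := by
        have : ∃ k, x k ≠ 0 := by
          by_contra h
          push_neg at h
          exact hx (funext h)
        obtain ⟨k, hk⟩ := this
        refine Finset.sum_pos' (fun k _ => sq_nonneg _) ⟨k, Finset.mem_univ k, ?_⟩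
        positivity
      have hlow : -(Msum * ∑ k, x k ^ 2) ≤ ∑ i, ∑ j, G i j * (x i * x j) :=
        neg_le_of_abs_le (hquad_abs x)
      have h2 : 0 < (∑ k, x k ^ 2) + ε * ∑ i, ∑ j, G i j * (x i * x j) := by
        nlinarith [hε1, hεpos', hSx, hlow]
      positivity
  -- the quadratic form of Q is at most 1 on B
  have hQle : ∀ x ∈ B, dotProduct x (Q.mulVec x) ≤ 1 := by
    intro x hx
    rw [hsplit]
    have h1 : (∑ k, x k ^ 2) + ε * ∑ i, ∑ j, G i j * (x i * x j) ≤ c := by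
      have h2 := hq x hx
      rw [hGq x] at *
      have h3 := hball x hx
      nlinarith [hεpos']
    calc c⁻¹ * ((∑ k, x k ^ 2) + ε * ∑ i, ∑ j, G i j * (x i * x j))
        ≤ c⁻¹ * c := mul_le_mul_of_nonneg_left h1 (by positivity)
      _ = 1 := inv_mul_cancel₀ (ne_of_gt hε2)
  -- determinant computation
  have hdetA : (1 + ε • G).det = 1 + G.trace * ε + Polynomial.eval ε P * ε ^ 2 :=
    Matrix.det_one_add_smul ε G
  have hcd : c ^ d < (1 + ε • G).det := by
    have := hε3
    rw [hφ] at this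
    simp only at this
    rw [hdetA, hc]
    linarith
  have hQdet : Q.det = (c⁻¹) ^ d * (1 + ε • G).det := by
    rw [hQ, Matrix.det_smul, Fintype.card_fin]
  have hfinal : (1:ℝ) < Q.det := by
    rw [hQdet]
    calc (1:ℝ) = (c⁻¹) ^ d * c ^ d := by
          rw [← mul_pow, inv_mul_cancel₀ (ne_of_gt hε2), one_pow]
      _ < (c⁻¹) ^ d * (1 + ε • G).det :=
          mul_lt_mul_of_pos_left hcd (pow_pos (inv_pos.mpr hε2) d)
  have := hmin Q hQpos hQle
  linarith
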